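/- Define D(s) = -2ψ(1-2s) - 2ψ(1+2s) + 3ψ(1-s) + 3ψ(1+s) for s ∈ [0, 1/38]. Then D(s) = 2∑_{k≥0} (ψ^{(2k)}(1)/(2k)!)·(3 - 2^{2k+1})·s^{2k}, D is increasing on [0,1/38], and -2γ = D(0) ≤ D(s) ≤ D(1/38) < -1.14, where γ is the Euler–Mascheroni constant. -/

import Mathlib

noncomputable def digamma (x : ℝ) : ℝ := deriv (fun y => Real.log (Real.Gamma y)) x

noncomputable def polygamma (n : ℕ) (x : ℝ) : ℝ := iteratedDeriv n digamma x

noncomputable def D (s : ℝ) : ℝ :=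
  -2 * digamma (1 - 2 * s) - 2 * digamma (1 + 2 * s) +
    3 * digamma (1 - s) + 3 * digamma (1 + s)

open Real Filter Topology Finset Set

local notation "γ" => Real.eulerMascheroniConstant

noncomputable def Q (p : ℕ) (x : ℝ) : ℝ := ∑' n : ℕ, 1 / ((n:ℝ) + x) ^ p


lemma add_ge_min_mul {c y : ℝ} (hc : 0 < c) (hy : c ≤ y) (n : ℕ) :
    min c 1 * ((n : ℝ) + 1) ≤ (n : ℝ) + y := by
  have h1 : min c 1 ≤ 1 := min_le_right _ _
  have h2 : min c 1 * (n : ℝ) ≤ (n : ℝ) := by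
    nlinarith [Nat.cast_nonneg (α := ℝ) n]
  nlinarith [min_le_left c 1]

lemma summable_base {p : ℕ} (hp : 2 ≤ p) :
    Summable (fun n : ℕ => 1 / ((n : ℝ) + 1) ^ p) := by
  have h : Summable (fun n : ℕ => 1 / ((n : ℝ)) ^ p) :=
    summable_one_div_nat_pow.2 (by omega)
  have := (summable_nat_add_iff (f := fun n : ℕ => 1 / ((n : ℝ)) ^ p) 1).2 h
  refine this.congr fun n => ?_
  push_cast
  ring

lemma inv_pow_le {c y : ℝ} (hc : 0 < c) (hy : c ≤ y) {p : ℕ} (n : ℕ) :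
    1 / ((n : ℝ) + y) ^ p ≤ (min c 1)⁻¹ ^ p * (1 / ((n : ℝ) + 1) ^ p) := by
  have hm : 0 < min c 1 := lt_min hc one_pos
  have h1 : (0:ℝ) < (n : ℝ) + 1 := by positivity
  have h2 : (0:ℝ) < (n : ℝ) + y := lt_of_lt_of_le (by positivity) (add_ge_min_mul hc hy n)
  have key : (min c 1 * ((n : ℝ) + 1)) ^ p ≤ ((n : ℝ) + y) ^ p :=
    pow_le_pow_left₀ (by positivity) (add_ge_min_mul hc hy n) p
  have h3 : (0:ℝ) < (min c 1 * ((n : ℝ) + 1)) ^ p := by positivity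
  have := one_div_le_one_div_of_le h3 key
  refine this.trans (le_of_eq ?_)
  rw [mul_pow]
  field_simp
  rw [one_div_pow, mul_one_div_cancel (pow_ne_zero _ hm.ne')]

lemma summable_inv_pow_add' {c : ℝ} (hc : 0 < c) {y : ℝ} (hy : c ≤ y) {p : ℕ} (hp : 2 ≤ p) :
    Summable (fun n : ℕ => 1 / ((n : ℝ) + y) ^ p) := by
  have hy0 : 0 < y := hc.trans_le hy
  refine ((summable_base hp).mul_left ((min c 1)⁻¹ ^ p)).of_nonneg_of_le
    (fun n => by positivity) (fun n => inv_pow_le hc hy n)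

lemma summable_inv_pow_add {x : ℝ} (hx : 0 < x) {p : ℕ} (hp : 2 ≤ p) :
    Summable (fun n : ℕ => 1 / ((n : ℝ) + x) ^ p) :=
  summable_inv_pow_add' hx le_rfl hp

lemma summable_term {x : ℝ} (hx : 0 < x) :
    Summable (fun n : ℕ => 1 / ((n:ℝ) + 1) - 1 / ((n:ℝ) + x)) := by
  have hb : Summable (fun n : ℕ => (|x - 1| * (min x 1)⁻¹) * (1 / ((n : ℝ) + 1) ^ 2)) :=
    (summable_base le_rfl).mul_left _
  refine Summable.of_abs (hb.of_nonneg_of_le (fun n => abs_nonneg _) (fun n => ?_))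
  have h1 : (0:ℝ) < (n : ℝ) + 1 := by positivity
  have h2 : (0:ℝ) < (n : ℝ) + x := by positivity
  have heq : 1 / ((n:ℝ) + 1) - 1 / ((n:ℝ) + x) = (x - 1) / (((n:ℝ) + 1) * ((n:ℝ) + x)) := by
    field_simp
    ring
  rw [heq, abs_div, abs_mul, abs_of_pos h1, abs_of_pos h2]
  have hle : 1 / (((n:ℝ) + 1) * ((n:ℝ) + x)) ≤ (min x 1)⁻¹ * (1 / ((n : ℝ) + 1) ^ 2) := by
    have key := add_ge_min_mul hx le_rfl n
    have hm : 0 < min x 1 := lt_min hx one_pos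
    have : min x 1 * (((n:ℝ) + 1) * ((n:ℝ) + 1)) ≤ ((n:ℝ) + 1) * ((n:ℝ) + x) := by
      nlinarith
    calc 1 / (((n:ℝ) + 1) * ((n:ℝ) + x)) ≤ 1 / (min x 1 * (((n:ℝ) + 1) * ((n:ℝ) + 1))) := by
          apply one_div_le_one_div_of_le (by positivity) this
      _ = (min x 1)⁻¹ * (1 / ((n : ℝ) + 1) ^ 2) := by
          rw [pow_two]
          field_simp
  calc |x - 1| / (((n:ℝ) + 1) * ((n:ℝ) + x)) = |x - 1| * (1 / (((n:ℝ) + 1) * ((n:ℝ) + x))) := by ring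
    _ ≤ |x - 1| * ((min x 1)⁻¹ * (1 / ((n : ℝ) + 1) ^ 2)) := by
        exact mul_le_mul_of_nonneg_left hle (abs_nonneg _)
    _ = |x - 1| * (min x 1)⁻¹ * (1 / ((n : ℝ) + 1) ^ 2) := by ring


lemma hasDerivAt_tsum_local {h h' : ℕ → ℝ → ℝ} {c : ℝ} {x : ℝ} (hx : c < x)
    {u : ℕ → ℝ} (hu : Summable u)
    (hd : ∀ n y, c < y → HasDerivAt (h n) (h' n y) y)
    (hb : ∀ n y, c < y → |h' n y| ≤ u n)
    (hs : ∀ y, c < y → Summable (fun n => h n y)) :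
    HasDerivAt (fun y => ∑' n, h n y) (∑' n, h' n x) x := by
  refine hasDerivAt_of_tendstoUniformlyOn (s := Set.Ioi c) (l := atTop) isOpen_Ioi
    (f := fun (N : ℕ) y => ∑ n ∈ range N, h n y)
    (f' := fun (N : ℕ) y => ∑ n ∈ range N, h' n y)
    (g := fun y => ∑' n, h n y) (g' := fun y => ∑' n, h' n y) ?_ ?_ ?_ hx
  · exact tendstoUniformlyOn_tsum_nat hu (fun n y hy => by
      rw [Real.norm_eq_abs]; exact hb n y hy)
  · filter_upwards with N y hy
    exact HasDerivAt.fun_sum (fun n _ => hd n y hy)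
  · intro y hy
    exact ((hs y hy).hasSum.tendsto_sum_nat)

lemma hasDerivAt_inv_pow_term (n : ℕ) {p : ℕ} (hp : 1 ≤ p) {y : ℝ} (hy : 0 < (n:ℝ) + y) :
    HasDerivAt (fun z => 1 / ((n:ℝ) + z) ^ p) (-(p:ℝ) / ((n:ℝ) + y) ^ (p+1)) y := by
  have h0 : HasDerivAt (fun z : ℝ => (n:ℝ) + z) 1 y := (hasDerivAt_id y).const_add _
  have h1 : HasDerivAt (fun z : ℝ => ((n:ℝ) + z) ^ p) ((p:ℝ) * ((n:ℝ) + y) ^ (p-1) * 1) y :=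
    h0.pow p
  have h2 := h1.inv (by positivity)
  have heq : -((p:ℝ) * ((n:ℝ) + y) ^ (p-1) * 1) / (((n:ℝ) + y) ^ p) ^ 2
      = -(p:ℝ) / ((n:ℝ) + y) ^ (p+1) := by
    rw [mul_one, ← pow_mul, neg_div, neg_div, neg_inj, div_eq_div_iff (by positivity) (by positivity),
      mul_assoc, ← pow_add]
    congr 2
    omega
  rw [heq] at h2
  simpa only [one_div, Pi.inv_def] using h2





lemma digamma_eq {x : ℝ} (hx : 0 < x) :
    digamma x = -γ + ∑' n : ℕ, (1 / ((n:ℝ) + 1) - 1 / ((n:ℝ) + x)) := by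
  set f : ℝ → ℝ := fun y => Real.log (Real.Gamma y) with hf
  have hcv : ConvexOn ℝ (Ioi 0) f := Real.convexOn_log_Gamma
  have h_rec : ∀ y : ℝ, 0 < y → f (y + 1) = f y + Real.log y := by
    intro y hy
    simp only [hf, Real.Gamma_add_one hy.ne',
      Real.log_mul hy.ne' (Real.Gamma_pos_of_pos hy).ne', add_comm]
  have hder : ∀ {y : ℝ}, 0 < y → DifferentiableAt ℝ f y := by
    intro y hy
    refine ((Real.differentiableAt_Gamma ?_).log (Real.Gamma_ne_zero ?_)) <;>
      exact fun m => ((neg_nonpos.mpr m.cast_nonneg).trans_lt hy).ne'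
  have hder_rec : ∀ y : ℝ, 0 < y → deriv f (y + 1) = deriv f y + 1 / y := by
    intro y hy
    rw [← deriv_comp_add_const, one_div, ← Real.deriv_log,
      ← deriv_add (hder (by positivity)) (Real.differentiableAt_log hy.ne')]
    apply Filter.EventuallyEq.deriv_eq
    filter_upwards [eventually_gt_nhds hy] using h_rec
  -- partial sums
  set S : ℕ → ℝ := fun n => ∑ k ∈ range n, 1 / ((k:ℝ) + x) with hS
  have hder_nat : ∀ n : ℕ, deriv f (x + n) = deriv f x + S n := by
    intro n
    induction n with
    | zero => simp [hS]
    | succ n ih =>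
      have : x + (n + 1 : ℕ) = (x + n) + 1 := by push_cast; ring
      rw [this, hder_rec (x + n) (by positivity), ih]
      simp only [hS]
      rw [sum_range_succ]
      push_cast
      ring
  have upper : ∀ n : ℕ, deriv f (x + n) ≤ Real.log (x + n) := by
    intro n
    have h1 : (0:ℝ) < x + n := by positivity
    refine (hcv.deriv_le_slope (mem_Ioi.mpr h1) (mem_Ioi.mpr (by linarith : (0:ℝ) < x + n + 1))
        (by linarith) (hder h1)).trans (le_of_eq ?_)
    rw [slope_def_field, show x + (n:ℝ) + 1 - (x + n) = 1 by ring, div_one,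
      h_rec (x + n) h1, add_sub_cancel_left]
  have lower : ∀ n : ℕ, Real.log (x + n) ≤ deriv f (x + (n + 1 : ℕ)) := by
    intro n
    have h1 : (0:ℝ) < x + n := by positivity
    have key : Real.log (x + n) ≤ deriv f ((x + n) + 1) := by
      refine (le_of_eq ?_).trans <| hcv.slope_le_deriv (mem_Ioi.mpr h1)
        (mem_Ioi.mpr (by linarith : (0:ℝ) < x + n + 1)) (by linarith)
        (hder (by linarith))
      rw [slope_def_field, show x + (n:ℝ) + 1 - (x + n) = 1 by ring, div_one,
        h_rec (x + n) h1, add_sub_cancel_left]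
    rw [show x + ((n + 1 : ℕ) : ℝ) = (x + n) + 1 by push_cast; ring]
    exact key
  -- limits
  set T : ℝ := -γ + ∑' n : ℕ, (1 / ((n:ℝ) + 1) - 1 / ((n:ℝ) + x)) with hT
  have hharm : ∀ n : ℕ, ((harmonic n : ℚ) : ℝ) = ∑ k ∈ range n, 1 / ((k:ℝ) + 1) := by
    intro n
    rw [harmonic]
    push_cast
    simp [one_div]
  have tend1 : Tendsto (fun n : ℕ => Real.log (x + n) - Real.log ((n:ℝ) + 1)) atTop (𝓝 0) := by
    have hq : Tendsto (fun n : ℕ => 1 + (x - 1) * ((n:ℝ) + 1)⁻¹) atTop (𝓝 1) := by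
      have h0 : Tendsto (fun n : ℕ => ((n:ℝ) + 1)) atTop atTop :=
        tendsto_atTop_add_const_right _ _ tendsto_natCast_atTop_atTop
      have := h0.inv_tendsto_atTop.const_mul (x - 1)
      have h2 := (tendsto_const_nhds (x := (1:ℝ))).add this
      rw [mul_zero, add_zero] at h2
      exact h2
    have hlog : Tendsto (fun n : ℕ => Real.log (1 + (x - 1) * ((n:ℝ) + 1)⁻¹)) atTop (𝓝 0) := by
      have := (Real.continuousAt_log one_ne_zero).tendsto.comp hq
      simpa [Function.comp_def] using this
    refine hlog.congr' ?_
    filter_upwards [eventually_gt_atTop 0] with n hn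
    have h1 : ((n:ℝ) + 1) ≠ 0 := by positivity
    have h2 : (0:ℝ) < x + n := by positivity
    rw [← Real.log_div h2.ne' h1]
    congr 1
    field_simp
    ring
  have tend2 : Tendsto (fun n : ℕ => ((harmonic n : ℚ) : ℝ) - Real.log ((n:ℝ) + 1)) atTop (𝓝 γ) := by
    have := Real.tendsto_eulerMascheroniSeq
    refine this.congr fun n => ?_
    rw [Real.eulerMascheroniSeq]
  have tend3 : Tendsto (fun n : ℕ => ∑ k ∈ range n, (1 / ((k:ℝ) + 1) - 1 / ((k:ℝ) + x)))
      atTop (𝓝 (∑' n : ℕ, (1 / ((n:ℝ) + 1) - 1 / ((n:ℝ) + x)))) :=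
    (summable_term hx).hasSum.tendsto_sum_nat
  have tendU : Tendsto (fun n : ℕ => Real.log (x + n) - S n) atTop (𝓝 T) := by
    have := (tend1.sub tend2).add tend3
    rw [show (0:ℝ) - γ + (∑' n : ℕ, (1 / ((n:ℝ) + 1) - 1 / ((n:ℝ) + x))) = T by rw [hT]; ring] at this
    refine this.congr fun n => ?_
    rw [hharm n, hS, Finset.sum_sub_distrib]
    ring
  have tend4 : Tendsto (fun n : ℕ => 1 / ((n:ℝ) + x)) atTop (𝓝 0) := by
    have h0 : Tendsto (fun n : ℕ => ((n:ℝ) + x)) atTop atTop :=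
      tendsto_atTop_add_const_right _ _ tendsto_natCast_atTop_atTop
    simpa [one_div, Pi.inv_def] using h0.inv_tendsto_atTop
  have tendL : Tendsto (fun n : ℕ => Real.log (x + n) - S (n + 1)) atTop (𝓝 T) := by
    have := tendU.sub tend4
    rw [sub_zero] at this
    refine this.congr fun n => ?_
    simp only [hS]
    rw [sum_range_succ]
    ring
  have hU : ∀ n : ℕ, deriv f x ≤ Real.log (x + n) - S n := by
    intro n
    have := upper n
    rw [hder_nat n] at this
    linarith
  have hL : ∀ n : ℕ, Real.log (x + n) - S (n + 1) ≤ deriv f x := by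
    intro n
    have := lower n
    rw [hder_nat (n + 1)] at this
    linarith
  have : digamma x = deriv f x := rfl
  rw [this]
  exact le_antisymm (ge_of_tendsto tendU (Eventually.of_forall hU))
    (le_of_tendsto tendL (Eventually.of_forall hL))





lemma digamma_one : digamma 1 = -γ := by
  have h := Real.hasDerivAt_Gamma_one.log (by rw [Real.Gamma_one]; norm_num)
  rw [Real.Gamma_one] at h
  simpa [digamma] using h.deriv

lemma hasDerivAt_Q {p : ℕ} (hp : 2 ≤ p) {x : ℝ} (hx : 0 < x) :
    HasDerivAt (Q p) (-(p:ℝ) * Q (p+1) x) x := by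
  have hc2 : 0 < x / 2 := half_pos hx
  have key : HasDerivAt (fun y => ∑' n : ℕ, 1 / ((n:ℝ) + y) ^ p)
      (∑' n : ℕ, (-(p:ℝ) / ((n:ℝ) + x) ^ (p+1))) x := by
    refine hasDerivAt_tsum_local (half_lt_self hx)
      (h := fun n y => 1 / ((n:ℝ) + y) ^ p)
      (h' := fun n y => -(p:ℝ) / ((n:ℝ) + y) ^ (p+1))
      (u := fun n => (p:ℝ) * ((min (x/2) 1)⁻¹ ^ (p+1) * (1 / ((n:ℝ) + 1) ^ (p+1))))
      (((summable_base (by omega)).mul_left _).mul_left _) ?_ ?_ ?_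
    · intro n y hy
      exact hasDerivAt_inv_pow_term n (by omega)
        (by nlinarith [Nat.cast_nonneg (α := ℝ) n])
    · intro n y hy
      have hny : (0:ℝ) < (n:ℝ) + y := by nlinarith [Nat.cast_nonneg (α := ℝ) n]
      rw [abs_div, abs_neg, abs_of_nonneg (by positivity : (0:ℝ) ≤ (p:ℝ)),
        abs_of_pos (by positivity : (0:ℝ) < ((n:ℝ) + y) ^ (p+1))]
      rw [div_eq_mul_one_div]
      exact mul_le_mul_of_nonneg_left (inv_pow_le hc2 hy.le n) (by positivity)
    · intro y hy
      exact summable_inv_pow_add' hc2 hy.le (by omega)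
  have heq : (∑' n : ℕ, (-(p:ℝ) / ((n:ℝ) + x) ^ (p+1))) = -(p:ℝ) * Q (p+1) x := by
    rw [Q, ← tsum_mul_left]
    congr 1; funext n
    rw [neg_div, mul_one_div, neg_div]
  rw [heq] at key
  exact key

lemma hasDerivAt_G {x : ℝ} (hx : 0 < x) :
    HasDerivAt (fun y => ∑' n : ℕ, (1 / ((n:ℝ) + 1) - 1 / ((n:ℝ) + y))) (Q 2 x) x := by
  have hc2 : 0 < x / 2 := half_pos hx
  have key : HasDerivAt (fun y => ∑' n : ℕ, (1 / ((n:ℝ) + 1) - 1 / ((n:ℝ) + y)))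
      (∑' n : ℕ, 1 / ((n:ℝ) + x) ^ 2) x := by
    refine hasDerivAt_tsum_local (half_lt_self hx)
      (h := fun n y => 1 / ((n:ℝ) + 1) - 1 / ((n:ℝ) + y))
      (h' := fun n y => 1 / ((n:ℝ) + y) ^ 2)
      (u := fun n => (min (x/2) 1)⁻¹ ^ 2 * (1 / ((n:ℝ) + 1) ^ 2))
      ((summable_base le_rfl).mul_left _) ?_ ?_ ?_
    · intro n y hy
      have hny : (0:ℝ) < (n:ℝ) + y := by nlinarith [Nat.cast_nonneg (α := ℝ) n]
      have h1 := (hasDerivAt_inv_pow_term n le_rfl hny).const_sub (1 / ((n:ℝ) + 1))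
      norm_num at h1
      rw [neg_div, neg_neg] at h1
      simpa [one_div] using h1
    · intro n y hy
      have hny : (0:ℝ) < (n:ℝ) + y := by nlinarith [Nat.cast_nonneg (α := ℝ) n]
      rw [abs_of_pos (by positivity)]
      exact inv_pow_le hc2 hy.le n
    · intro y hy
      exact summable_term (hc2.trans hy)
  exact key

lemma polygamma_formula (m : ℕ) : ∀ x : ℝ, 0 < x →
    iteratedDeriv (m+1) digamma x = (-1:ℝ)^(m+2) * (m+1).factorial * Q (m+2) x := by
  induction m with
  | zero =>
    intro x hx
    rw [iteratedDeriv_one]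
    have hev : digamma =ᶠ[𝓝 x]
        (fun y => -γ + ∑' n : ℕ, (1 / ((n:ℝ) + 1) - 1 / ((n:ℝ) + y))) := by
      filter_upwards [isOpen_Ioi.mem_nhds (mem_Ioi.mpr hx)] with y hy
      exact digamma_eq hy
    rw [hev.deriv_eq, ((hasDerivAt_G hx).const_add (-γ)).deriv]
    norm_num
  | succ m ih =>
    intro x hx
    rw [iteratedDeriv_succ]
    have hev : iteratedDeriv (m+1) digamma =ᶠ[𝓝 x]
        (fun y => (-1:ℝ)^(m+2) * (m+1).factorial * Q (m+2) y) := by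
      filter_upwards [isOpen_Ioi.mem_nhds (mem_Ioi.mpr hx)] with y hy
      exact ih y hy
    rw [hev.deriv_eq,
      ((hasDerivAt_Q (p := m+2) (by omega) hx).const_mul ((-1:ℝ)^(m+2) * (m+1).factorial)).deriv]
    push_cast [Nat.factorial_succ, pow_succ]
    ring

lemma polygamma_even (k : ℕ) :
    polygamma (2*(k+1)) 1 = -(((2*(k+1)).factorial : ℝ) * Q (2*(k+1)+1) 1) := by
  have h := polygamma_formula (2*k+1) 1 one_pos
  have hodd : (-1:ℝ)^(2*k+1+2) = -1 := Odd.neg_one_pow ⟨k+1, by ring⟩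
  rw [hodd] at h
  have e1 : 2*k+1+1 = 2*(k+1) := by omega
  have e2 : 2*k+1+2 = 2*(k+1)+1 := by omega
  rw [e1, e2] at h
  show iteratedDeriv (2*(k+1)) digamma 1 = _
  rw [h]
  ring




section master
variable {t : ℝ}

lemma term_pair (ht0 : 0 ≤ t) (ht1 : t ≤ 1/2) (n : ℕ) :
    (1/((n:ℝ)+1) - 1/((n:ℝ)+(1-t))) + (1/((n:ℝ)+1) - 1/((n:ℝ)+(1+t)))
      = -(2*t^2 / (((n:ℝ)+1) * (((n:ℝ)+1)^2 - t^2))) := by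
  have hn : (0:ℝ) ≤ (n:ℝ) := Nat.cast_nonneg n
  have c1 : (0:ℝ) < (n:ℝ)+(1-t) := by linarith
  have c2 : (0:ℝ) < (n:ℝ)+(1+t) := by linarith
  have c3 : (0:ℝ) < (n:ℝ)+1 := by linarith
  have c4 : (0:ℝ) < ((n:ℝ)+1)^2 - t^2 := by nlinarith
  field_simp
  ring

lemma hasSum_geom_term (ht0 : 0 ≤ t) (ht1 : t ≤ 1/2) (n : ℕ) :
    HasSum (fun k : ℕ => 2 * t^(2*k+2) / ((n:ℝ)+1)^(2*k+3))
      (2*t^2 / (((n:ℝ)+1) * (((n:ℝ)+1)^2 - t^2))) := by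
  have hn : (0:ℝ) ≤ (n:ℝ) := Nat.cast_nonneg n
  have c3 : (0:ℝ) < (n:ℝ)+1 := by linarith
  set r : ℝ := (t/((n:ℝ)+1))^2 with hr
  have hr0 : 0 ≤ r := by positivity
  have hr1 : r < 1 := by
    rw [hr, div_pow]
    rw [div_lt_one (by positivity)]
    nlinarith
  have hgeo := hasSum_geometric_of_lt_one hr0 hr1
  have h2 := hgeo.mul_left (2*t^2 / ((n:ℝ)+1)^3)
  have hterm : ∀ k : ℕ, (2*t^2 / ((n:ℝ)+1)^3) * r^k = 2 * t^(2*k+2) / ((n:ℝ)+1)^(2*k+3) := by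
    intro k
    rw [hr, ← pow_mul, div_pow, div_mul_div_comm,
      show 2*t^2 * t^(2*k) = 2 * t^(2*k+2) by rw [pow_add]; ring,
      show ((n:ℝ)+1)^3 * ((n:ℝ)+1)^(2*k) = ((n:ℝ)+1)^(2*k+3) by rw [pow_add]; ring]
  have hval : (2*t^2 / ((n:ℝ)+1)^3) * (1-r)⁻¹ = 2*t^2 / (((n:ℝ)+1) * (((n:ℝ)+1)^2 - t^2)) := by
    have c4 : (0:ℝ) < ((n:ℝ)+1)^2 - t^2 := by nlinarith
    have hr2 : 1 - r = (((n:ℝ)+1)^2 - t^2)/((n:ℝ)+1)^2 := by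
      rw [hr, div_pow]
      field_simp
    rw [hr2]
    field_simp
  rw [hval] at h2
  simp only [hterm] at h2
  exact h2

lemma summable_g (ht0 : 0 ≤ t) (ht1 : t ≤ 1/2) :
    Summable (fun n : ℕ => 2*t^2 / (((n:ℝ)+1) * (((n:ℝ)+1)^2 - t^2))) := by
  have h1t : (0:ℝ) < 1 - t := by linarith
  have h2t : (0:ℝ) < 1 + t := by linarith
  have h := ((summable_term h1t).add (summable_term h2t)).neg
  refine h.congr fun n => ?_
  rw [term_pair ht0 ht1 n]
  ring

lemma pair_eq (ht0 : 0 ≤ t) (ht1 : t ≤ 1/2) :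
    digamma (1-t) + digamma (1+t)
      = -(2*γ) - ∑' k : ℕ, 2 * t^(2*k+2) * Q (2*k+3) 1 := by
  have h1t : (0:ℝ) < 1 - t := by linarith
  have h2t : (0:ℝ) < 1 + t := by linarith
  have hA := summable_term h1t
  have hB := summable_term h2t
  rw [digamma_eq h1t, digamma_eq h2t]
  have hsum : (∑' n:ℕ, (1/((n:ℝ)+1) - 1/((n:ℝ)+(1-t)))) + (∑' n:ℕ, (1/((n:ℝ)+1) - 1/((n:ℝ)+(1+t))))
      = -∑' n:ℕ, 2*t^2 / (((n:ℝ)+1) * (((n:ℝ)+1)^2 - t^2)) := by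
    rw [← Summable.tsum_add hA hB, ← tsum_neg]
    exact tsum_congr fun n => by rw [← term_pair ht0 ht1 n]
  have hrow : ∀ n : ℕ, Summable (fun k => 2 * t^(2*k+2) / ((n:ℝ)+1)^(2*k+3)) :=
    fun n => (hasSum_geom_term ht0 ht1 n).summable
  have hrowsum : ∀ n : ℕ, (∑' k, 2 * t^(2*k+2) / ((n:ℝ)+1)^(2*k+3))
      = 2*t^2 / (((n:ℝ)+1) * (((n:ℝ)+1)^2 - t^2)) :=
    fun n => (hasSum_geom_term ht0 ht1 n).tsum_eq
  have hup : Summable (Function.uncurry (fun (n k : ℕ) => 2 * t^(2*k+2) / ((n:ℝ)+1)^(2*k+3))) := by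
    apply (summable_prod_of_nonneg
      (fun p => div_nonneg (mul_nonneg (by norm_num) (pow_nonneg ht0 _)) (by positivity))).2
    constructor
    · intro n
      simpa only [Function.uncurry_apply_pair] using hrow n
    · simp only [Function.uncurry_apply_pair]
      simpa only [hrowsum] using summable_g ht0 ht1
  have hcol : ∀ k : ℕ, Summable (fun n : ℕ => 2 * t^(2*k+2) / ((n:ℝ)+1)^(2*k+3)) := by
    intro k
    have h := (summable_base (p := 2*k+3) (by omega)).mul_left (2 * t^(2*k+2))
    refine h.congr fun n => ?_
    rw [mul_one_div]
  have hswap : (∑' n:ℕ, 2*t^2 / (((n:ℝ)+1) * (((n:ℝ)+1)^2 - t^2)))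
      = ∑' k : ℕ, 2 * t^(2*k+2) * Q (2*k+3) 1 := by
    calc ∑' n:ℕ, 2*t^2 / (((n:ℝ)+1) * (((n:ℝ)+1)^2 - t^2))
        = ∑' (n:ℕ) (k:ℕ), 2 * t^(2*k+2) / ((n:ℝ)+1)^(2*k+3) :=
          tsum_congr fun n => (hrowsum n).symm
      _ = ∑' (k:ℕ) (n:ℕ), 2 * t^(2*k+2) / ((n:ℝ)+1)^(2*k+3) :=
          (Summable.tsum_comm' hup hrow hcol).symm
      _ = ∑' k:ℕ, 2 * t^(2*k+2) * Q (2*k+3) 1 := by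
          refine tsum_congr fun k => ?_
          rw [Q, ← tsum_mul_left]
          exact tsum_congr fun n => by rw [mul_one_div]
  linear_combination hsum - hswap

end master




lemma Q_nonneg (p : ℕ) : 0 ≤ Q p 1 := tsum_nonneg (fun n => by positivity)

lemma Q3_le : Q 3 1 ≤ 3/2 := by
  have hsum := summable_base (p := 3) (by norm_num)
  have hshift : Summable (fun n : ℕ => 1 / ((n:ℝ) + 2) ^ 3) :=
    summable_inv_pow_add' (c := 2) two_pos le_rfl (by norm_num)
  have h0 : Q 3 1 = 1 + ∑' n : ℕ, 1 / ((n:ℝ) + 2) ^ 3 := by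
    rw [Q, Summable.tsum_eq_zero_add hsum]
    norm_num
    exact tsum_congr fun n => by push_cast; ring_nf
  rw [h0]
  have htail : ∑' n : ℕ, 1 / ((n:ℝ) + 2) ^ 3 ≤ 1/2 := by
    apply Summable.tsum_le_of_sum_range_le hshift
    intro N
    have hle : ∀ i ∈ range N, 1 / ((i:ℝ) + 2) ^ 3
        ≤ (1/2) * (1/(((i:ℕ):ℝ)+1)^2) - (1/2) * (1/((((i+1):ℕ):ℝ)+1)^2) := by
      intro i _
      have h1 : (0:ℝ) < (i:ℝ) + 1 := by positivity
      have h2 : (0:ℝ) < (i:ℝ) + 2 := by positivity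
      push_cast
      rw [show ((i:ℝ) + 1 + 1) = (i:ℝ) + 2 by ring, ← sub_nonneg]
      have hexp : (1/2) * (1/(((i:ℕ):ℝ)+1)^2) - (1/2)*(1/(((i:ℕ):ℝ)+2)^2) - 1/(((i:ℕ):ℝ)+2)^3
          = (3*((i:ℝ)+1)+1) / (2*(((i:ℝ)+1)^2)*(((i:ℝ)+2)^3)) := by
        field_simp
        ring
      rw [hexp]
      positivity
    calc ∑ i ∈ range N, 1 / ((i:ℝ) + 2) ^ 3
        ≤ ∑ i ∈ range N, ((1/2) * (1/(((i:ℕ):ℝ)+1)^2) - (1/2) * (1/((((i+1):ℕ):ℝ)+1)^2)) :=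
          Finset.sum_le_sum hle
      _ = (1/2) * (1/(((0:ℕ):ℝ)+1)^2) - (1/2) * (1/(((N:ℕ):ℝ)+1)^2) :=
          Finset.sum_range_sub' (fun i => (1/2) * (1/(((i:ℕ):ℝ)+1)^2)) N
      _ ≤ 1/2 := by
          have h3 : (0:ℝ) ≤ (1/2) * (1/(((N:ℕ):ℝ)+1)^2) := by positivity
          have h4 : (1/2) * (1/(((0:ℕ):ℝ)+1)^2) = 1/2 := by norm_num
          linarith
  linarith

lemma Q_le_Q3 {p : ℕ} (hp : 3 ≤ p) : Q p 1 ≤ Q 3 1 := by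
  refine Summable.tsum_le_tsum (fun n => ?_) (summable_base (by omega)) (summable_base (by norm_num))
  have h1 : (1:ℝ) ≤ (n:ℝ) + 1 := by
    have : (0:ℝ) ≤ (n:ℝ) := Nat.cast_nonneg n
    linarith
  exact one_div_le_one_div_of_le (by positivity) (pow_le_pow_right₀ h1 hp)

lemma pow_ineq : ∀ k : ℕ, 3*((2:ℝ)^(2*k+3) - 3)*90^k ≤ 15*1444^k := by
  intro k
  induction k with
  | zero => norm_num
  | succ k ih =>
    have hx : (8:ℝ) ≤ 2^(2*k+3) := by
      calc (8:ℝ) = 2^3 := by norm_num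
      _ ≤ 2^(2*k+3) := pow_le_pow_right₀ one_le_two (by omega)
    have hgh : (90:ℝ)^k ≤ 1444^k := pow_le_pow_left₀ (by norm_num) (by norm_num) k
    have hg : (0:ℝ) ≤ 90^k := by positivity
    have e1 : (2:ℝ)^(2*(k+1)+3) = 4 * 2^(2*k+3) := by
      rw [show 2*(k+1)+3 = (2*k+3)+2 by omega, pow_add]; ring
    have e2 : (90:ℝ)^(k+1) = 90*90^k := by rw [pow_succ]; ring
    have e3 : (1444:ℝ)^(k+1) = 1444*1444^k := by rw [pow_succ]; ring
    rw [e1, e2, e3]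
    nlinarith [ih, hx, hgh, hg]

lemma geom_tsum : ∑' k : ℕ, (15/1444) * ((1:ℝ)/90)^k = (15/1444) * (90/89) := by
  rw [tsum_mul_left, tsum_geometric_of_lt_one (by norm_num) (by norm_num)]
  norm_num

lemma summable_geom90 : Summable (fun k : ℕ => (15/1444) * ((1:ℝ)/90)^k) :=
  (summable_geometric_of_lt_one (by norm_num) (by norm_num)).mul_left _

lemma log_ub {y : ℝ} (hy : 10 ≤ y) :
    Real.log (1 + 1/y) ≤ 1/(y+1) + 1/(2*y) - 1/(2*(y+1)) := by
  have hy0 : (0:ℝ) < y := by linarith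
  have hx1 : |(-(1/y))| < 1 := by
    rw [abs_neg, abs_of_pos (by positivity), div_lt_one hy0]; linarith
  have h := Real.abs_log_sub_add_sum_range_le hx1 3
  rw [show (1 - -(1/y)) = 1 + 1/y by ring] at h
  have hsum : ∑ i ∈ range 3, (-(1/y))^(i+1)/((i:ℝ)+1) = -(1/y) + (1/y)^2/2 - (1/y)^3/3 := by
    rw [Finset.sum_range_succ, Finset.sum_range_succ, Finset.sum_range_succ, Finset.sum_range_zero]
    norm_num
    ring
  rw [hsum] at h
  have habs : |(-(1/y))| = 1/y := by rw [abs_neg, abs_of_pos (by positivity)]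
  rw [habs] at h
  have h2 := (abs_le.mp h).2
  have hlog : Real.log (1 + 1/y) ≤ 1/y - (1/y)^2/2 + (1/y)^3/3 + (1/y)^4/(1-1/y) := by
    linarith
  refine hlog.trans ?_
  have hy1 : (0:ℝ) < y - 1 := by linarith
  have hyp1 : (0:ℝ) < y + 1 := by linarith
  rw [← sub_nonneg]
  have hexp : 1/(y+1) + 1/(2*y) - 1/(2*(y+1)) - (1/y - (1/y)^2/2 + (1/y)^3/3 + (1/y)^4/(1-1/y))
      = (y^2 - 9*y - 4) / (6*y^3*(y+1)*(y-1)) := by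
    rw [show 1 - 1/y = (y-1)/y by field_simp]
    field_simp
    ring
  rw [hexp]
  exact div_nonneg (by nlinarith) (by positivity)


noncomputable def useq (n : ℕ) : ℝ := (harmonic n : ℝ) - Real.log n - 1/(2*n)

lemma useq_mono {n : ℕ} (hn : 10 ≤ n) : useq n ≤ useq (n+1) := by
  have hy : (10:ℝ) ≤ (n:ℝ) := by exact_mod_cast hn
  have hn0 : (0:ℝ) < (n:ℝ) := by linarith
  have hlog : Real.log ((n:ℝ)+1) - Real.log n = Real.log (1 + 1/(n:ℝ)) := by
    rw [← Real.log_div (by positivity) hn0.ne']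
    congr 1
    field_simp
  have hub := log_ub hy
  unfold useq
  rw [harmonic_succ]
  push_cast
  rw [inv_eq_one_div]
  linarith

lemma gamma_lb : 2436559/720720 - 4*Real.log 2 - 1/32 ≤ γ := by
  have hlim : Tendsto useq atTop (𝓝 γ) := by
    have h1 := Real.tendsto_harmonic_sub_log
    have h2 : Tendsto (fun n : ℕ => 1/(2*(n:ℝ))) atTop (𝓝 0) := by
      have h0 : Tendsto (fun n : ℕ => 2*(n:ℝ)) atTop atTop :=
        tendsto_natCast_atTop_atTop.const_mul_atTop two_pos
      have := h0.inv_tendsto_atTop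
      refine this.congr fun n => ?_
      simp [one_div]
    have h3 := h1.sub h2
    rw [sub_zero] at h3
    refine h3.congr fun n => ?_
    simp only [useq]
  have hmono : ∀ n, 16 ≤ n → useq 16 ≤ useq n := by
    intro n hn
    induction n, hn using Nat.le_induction with
    | base => exact le_rfl
    | succ n hn ih => exact ih.trans (useq_mono (by omega))
  have h16 : useq 16 = 2436559/720720 - 4*Real.log 2 - 1/32 := by
    unfold useq
    rw [show harmonic 16 = 2436559/720720 by norm_num [harmonic, Finset.sum_range_succ]]
    rw [show ((16:ℕ):ℝ) = 2^4 by norm_num, Real.log_pow]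
    norm_num
  rw [← h16]
  exact ge_of_tendsto hlim (eventually_atTop.mpr ⟨16, hmono⟩)


lemma Q_le' {p : ℕ} (hp : 3 ≤ p) : Q p 1 ≤ 3/2 := (Q_le_Q3 hp).trans Q3_le

lemma summable_W {t : ℝ} (ht0 : 0 ≤ t) (ht1 : t ≤ 1/2) :
    Summable (fun k : ℕ => 2 * t^(2*k+2) * Q (2*k+3) 1) := by
  refine Summable.of_nonneg_of_le
    (fun k => mul_nonneg (mul_nonneg (by norm_num) (pow_nonneg ht0 _)) (Q_nonneg _))
    (fun k => ?_)
    (((summable_geometric_of_lt_one (by norm_num) (by norm_num : (1:ℝ)/4 < 1))).mul_left (3/4))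
  have h1 : t^(2*k+2) ≤ (1/2:ℝ)^(2*k+2) := pow_le_pow_left₀ ht0 ht1 _
  have h2 : ((1:ℝ)/2)^(2*k+2) = (1/4:ℝ)^(k+1) := by
    rw [show 2*k+2 = 2*(k+1) by omega, pow_mul]
    norm_num
  have h3 : ((1:ℝ)/4)^(k+1) = (1/4) * (1/4:ℝ)^k := by rw [pow_succ]; ring
  have hQ : Q (2*k+3) 1 ≤ 3/2 := Q_le' (by omega)
  have ht' : (0:ℝ) ≤ t^(2*k+2) := pow_nonneg ht0 _
  have h4 : (0:ℝ) ≤ (1/4:ℝ)^k := by positivity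
  calc 2 * t^(2*k+2) * Q (2*k+3) 1 ≤ 2 * t^(2*k+2) * (3/2) := by
        apply mul_le_mul_of_nonneg_left hQ (by positivity)
    _ = 3 * t^(2*k+2) := by ring
    _ ≤ 3 * ((1/4) * (1/4:ℝ)^k) := by
        rw [← h3, ← h2]
        exact mul_le_mul_of_nonneg_left h1 (by norm_num)
    _ = (3/4) * (1/4:ℝ)^k := by ring

lemma vterm_eq (s : ℝ) (k : ℕ) :
    2*(2*(2*s)^(2*k+2) * Q (2*k+3) 1) - 3*(2*s^(2*k+2) * Q (2*k+3) 1)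
      = ((2:ℝ)^(2*k+4) - 6) * Q (2*k+3) 1 * s^(2*k+2) := by
  rw [mul_pow, show (2:ℝ)^(2*k+4) = 4*2^(2*k+2) by
    rw [show 2*k+4 = (2*k+2)+2 by omega, pow_add]; ring]
  ring

lemma summable_V {s : ℝ} (h0 : 0 ≤ s) (h1 : s ≤ 1/4) :
    Summable (fun k : ℕ => ((2:ℝ)^(2*k+4) - 6) * Q (2*k+3) 1 * s^(2*k+2)) := by
  have hW1 := (summable_W (t := 2*s) (by linarith) (by linarith)).mul_left 2
  have hW2 := (summable_W (t := s) h0 (by linarith)).mul_left 3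
  exact (hW1.sub hW2).congr (fun k => vterm_eq s k)

lemma D_master {s : ℝ} (h0 : 0 ≤ s) (h1 : s ≤ 1/4) :
    D s = -(2*γ) + ∑' k : ℕ, ((2:ℝ)^(2*k+4) - 6) * Q (2*k+3) 1 * s^(2*k+2) := by
  have ht1 := pair_eq (t := 2*s) (by linarith) (by linarith)
  have ht2 := pair_eq (t := s) h0 (by linarith)
  have hW1 := summable_W (t := 2*s) (by linarith) (by linarith)
  have hW2 := summable_W (t := s) h0 (by linarith)
  have hVsum : ∑' k : ℕ, ((2:ℝ)^(2*k+4) - 6) * Q (2*k+3) 1 * s^(2*k+2)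
      = 2*(∑' k : ℕ, 2*(2*s)^(2*k+2) * Q (2*k+3) 1)
        - 3*(∑' k : ℕ, 2*s^(2*k+2) * Q (2*k+3) 1) := by
    rw [← tsum_mul_left, ← tsum_mul_left, ← Summable.tsum_sub (hW1.mul_left 2) (hW2.mul_left 3)]
    exact tsum_congr fun k => (vterm_eq s k).symm
  show -2 * digamma (1 - 2*s) - 2*digamma (1+2*s) + 3*digamma (1-s) + 3*digamma (1+s) = _
  linear_combination (-2)*ht1 + 3*ht2 - hVsum

lemma F_succ_eq (s : ℝ) (k : ℕ) :
    polygamma (2*(k+1)) 1 / (Nat.factorial (2*(k+1)) : ℝ) * (3 - 2^(2*(k+1)+1)) * s^(2*(k+1))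
      = ((2:ℝ)^(2*k+3) - 3) * Q (2*k+3) 1 * s^(2*k+2) := by
  rw [polygamma_even k]
  have hfac : ((Nat.factorial (2*(k+1)) : ℝ)) ≠ 0 := by
    exact_mod_cast (Nat.factorial_pos _).ne'
  rw [show 2*(k+1)+1 = 2*k+3 by omega, show 2*(k+1) = 2*k+2 by omega]
  field_simp
  ring

lemma F_zero_eq (s : ℝ) :
    polygamma (2*0) 1 / (Nat.factorial (2*0) : ℝ) * (3 - 2^(2*0+1)) * s^(2*0) = -γ := by
  norm_num [polygamma, iteratedDeriv_zero, digamma_one]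

lemma summable_F {s : ℝ} (h0 : 0 ≤ s) (h1 : s ≤ 1/4) :
    Summable (fun k : ℕ =>
      polygamma (2*k) 1 / (Nat.factorial (2*k) : ℝ) * (3 - 2^(2*k+1)) * s^(2*k)) := by
  apply (summable_nat_add_iff 1).1
  refine ((summable_V h0 h1).mul_left (1/2)).congr (fun k => ?_)
  rw [F_succ_eq s k,
    show (2:ℝ)^(2*k+4) = 2*2^(2*k+3) by rw [show 2*k+4 = (2*k+3)+1 by omega, pow_succ]; ring]
  ring

lemma D_poly_eq {s : ℝ} (h0 : 0 ≤ s) (h1 : s ≤ 1/4) :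
    D s = 2 * ∑' k : ℕ,
      polygamma (2*k) 1 / (Nat.factorial (2*k) : ℝ) * (3 - 2^(2*k+1)) * s^(2*k) := by
  rw [Summable.tsum_eq_zero_add (summable_F h0 h1)]
  have hshift : ∑' k : ℕ,
      polygamma (2*(k+1)) 1 / (Nat.factorial (2*(k+1)) : ℝ) * (3 - 2^(2*(k+1)+1)) * s^(2*(k+1))
      = ∑' k : ℕ, ((2:ℝ)^(2*k+3) - 3) * Q (2*k+3) 1 * s^(2*k+2) :=
    tsum_congr fun k => F_succ_eq s k
  have hhalf : ∑' k : ℕ, ((2:ℝ)^(2*k+3) - 3) * Q (2*k+3) 1 * s^(2*k+2)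
      = (1/2) * ∑' k : ℕ, ((2:ℝ)^(2*k+4) - 6) * Q (2*k+3) 1 * s^(2*k+2) := by
    rw [← tsum_mul_left]
    refine tsum_congr fun k => ?_
    rw [show (2:ℝ)^(2*k+4) = 2*2^(2*k+3) by rw [show 2*k+4 = (2*k+3)+1 by omega, pow_succ]; ring]
    ring
  rw [F_zero_eq s, hshift, hhalf, D_master h0 h1]
  ring

lemma D_mono : MonotoneOn D (Set.Icc (0:ℝ) (1/38)) := by
  intro a ha b hb hab
  have ha4 : a ≤ 1/4 := le_trans ha.2 (by norm_num)
  have hb4 : b ≤ 1/4 := le_trans hb.2 (by norm_num)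
  rw [D_master ha.1 ha4, D_master hb.1 hb4]
  have hts : ∑' k : ℕ, ((2:ℝ)^(2*k+4) - 6) * Q (2*k+3) 1 * a^(2*k+2)
      ≤ ∑' k : ℕ, ((2:ℝ)^(2*k+4) - 6) * Q (2*k+3) 1 * b^(2*k+2) := by
    refine Summable.tsum_le_tsum (fun k => ?_) (summable_V ha.1 ha4) (summable_V hb.1 hb4)
    have hco : (0:ℝ) ≤ ((2:ℝ)^(2*k+4) - 6) * Q (2*k+3) 1 := by
      have h16 : (16:ℝ) ≤ 2^(2*k+4) := by
        calc (16:ℝ) = 2^4 := by norm_num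
        _ ≤ 2^(2*k+4) := pow_le_pow_right₀ one_le_two (by omega)
      exact mul_nonneg (by linarith) (Q_nonneg _)
    exact mul_le_mul_of_nonneg_left (pow_le_pow_left₀ ha.1 hab _) hco
  linarith

lemma D_zero : D 0 = -2*γ := by
  show -2 * digamma (1 - 2*0) - 2*digamma (1+2*0) + 3*digamma (1-0) + 3*digamma (1+0) = -2*γ
  norm_num [digamma_one]
  ring

lemma V_38_le : ∑' k : ℕ, ((2:ℝ)^(2*k+4) - 6) * Q (2*k+3) 1 * (1/38:ℝ)^(2*k+2)
    ≤ (15/1444) * (90/89) := by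
  rw [← geom_tsum]
  refine Summable.tsum_le_tsum (fun k => ?_) (summable_V (by norm_num) (by norm_num)) summable_geom90
  have hQ : Q (2*k+3) 1 ≤ 3/2 := Q_le' (by omega)
  have hQ0 : 0 ≤ Q (2*k+3) 1 := Q_nonneg _
  have h16 : (16:ℝ) ≤ 2^(2*k+4) := by
    calc (16:ℝ) = 2^4 := by norm_num
    _ ≤ 2^(2*k+4) := pow_le_pow_right₀ one_le_two (by omega)
  have hpow : ((1:ℝ)/38)^(2*k+2) = (1/1444:ℝ)^(k+1) := by
    rw [show 2*k+2 = 2*(k+1) by omega, pow_mul]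
    norm_num
  have step1 : ((2:ℝ)^(2*k+4) - 6) * Q (2*k+3) 1 * (1/38:ℝ)^(2*k+2)
      ≤ ((2:ℝ)^(2*k+4) - 6) * (3/2) * (1/1444:ℝ)^(k+1) := by
    rw [hpow]
    have hp14 : (0:ℝ) ≤ (1/1444:ℝ)^(k+1) := by positivity
    have := mul_le_mul_of_nonneg_left hQ (by linarith : (0:ℝ) ≤ (2:ℝ)^(2*k+4) - 6)
    exact mul_le_mul_of_nonneg_right this hp14
  refine step1.trans ?_
  rw [← sub_nonneg]
  have e24 : (2:ℝ)^(2*k+4) = 2*2^(2*k+3) := by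
    rw [show 2*k+4 = (2*k+3)+1 by omega, pow_succ]; ring
  have hexp : 15/1444 * ((1:ℝ)/90)^k - ((2:ℝ)^(2*k+4) - 6) * (3/2) * ((1:ℝ)/1444)^(k+1)
      = (15*(1444:ℝ)^k - 3*((2:ℝ)^(2*k+3) - 3)*90^k) / (1444 * 1444^k * 90^k) := by
    rw [e24, one_div_pow, one_div_pow, pow_succ]
    field_simp
    ring
  rw [hexp]
  exact div_nonneg (by linarith [pow_ineq k]) (by positivity)

lemma D_38_lt : D (1/38) < -1.14 := by
  have h := D_master (s := 1/38) (by norm_num) (by norm_num)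
  rw [h]
  have hV := V_38_le
  have hγ := gamma_lb
  have hlog := Real.log_two_lt_d9
  nlinarith [hV, hγ, hlog]

theorem D_properties :
    (∀ s ∈ Set.Icc (0 : ℝ) (1 / 38),
      D s = 2 * ∑' k : ℕ,
        polygamma (2 * k) 1 / (Nat.factorial (2 * k)) * (3 - 2 ^ (2 * k + 1)) * s ^ (2 * k)) ∧
    MonotoneOn D (Set.Icc (0 : ℝ) (1 / 38)) ∧
    D 0 = -2 * Real.eulerMascheroniConstant ∧
    (∀ s ∈ Set.Icc (0 : ℝ) (1 / 38), D 0 ≤ D s ∧ D s ≤ D (1 / 38)) ∧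
    D (1 / 38) < -1.14 := by
  refine ⟨?_, D_mono, ?_, ?_, D_38_lt⟩
  · intro s hs
    exact D_poly_eq hs.1 (le_trans hs.2 (by norm_num))
  · exact D_zero
  · intro s hs
    constructor
    · exact D_mono (Set.mem_Icc.mpr ⟨le_rfl, by norm_num⟩) hs hs.1
    · exact D_mono hs (Set.mem_Icc.mpr ⟨by norm_num, le_rfl⟩) hs.2
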